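/- Let r ≥ 3 be an odd integer, let n and n₀ be positive integers with n > n₀ and r < 2^{n₀}, and let m be a positive integer with 2^n/r − 1 < m < 2^n/r + 1. Then (2/(2^n·m)) · ∑_{j=1}^{(r−1)/2} sin²(π·m·j/2^n) / sin²(π·j/2^n) > (1 − 1/2^{n−n₀} − 1/r) · (1 − (π²/36)·((r+1)/r + 1/2^{n−n₀−1} + 1/2^{2(n−n₀)})). -/

import Mathlib

open Real

lemma my_sin_ge_sub_cube {x : ℝ} (hx : 0 ≤ x) : x - x ^ 3 / 6 ≤ Real.sin x := by
  have key : MonotoneOn (fun t : ℝ => Real.sin t - t + t ^ 3 / 6) (Set.Ici 0) := by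
    apply monotoneOn_of_deriv_nonneg (convex_Ici 0)
    · exact (Continuous.continuousOn (by continuity))
    · apply Differentiable.differentiableOn
      intro t
      exact ((Real.differentiable_sin t).sub (differentiable_id t)).add
        (((differentiable_id.pow 3) t).div_const 6)
    · intro t ht
      have hd : HasDerivAt (fun t : ℝ => Real.sin t - t + t ^ 3 / 6)
          (Real.cos t - 1 + t ^ 2 / 2) t := by
        have h1 : HasDerivAt (fun t : ℝ => Real.sin t) (Real.cos t) t := Real.hasDerivAt_sin t
        have h2 : HasDerivAt (fun t : ℝ => t) 1 t := hasDerivAt_id t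
        have h3 : HasDerivAt (fun t : ℝ => t ^ 3 / 6) (3 * t ^ 2 / 6) t := by
          simpa using ((hasDerivAt_id t).fun_pow 3).div_const 6
        have := (h1.fun_sub h2).fun_add h3
        exact this.congr_deriv (by ring)
      rw [hd.deriv]
      have := Real.one_sub_sq_div_two_le_cos (x := t)
      linarith
  have h0 : (fun t : ℝ => Real.sin t - t + t ^ 3 / 6) 0 ≤
      (fun t : ℝ => Real.sin t - t + t ^ 3 / 6) x :=
    key (Set.self_mem_Ici) (Set.mem_Ici.2 hx) hx
  simp at h0
  linarith

lemma my_sumsq (K : ℕ) : ∑ j ∈ Finset.Icc 1 K, (j : ℝ) ^ 2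
    = K * (K + 1) * (2 * K + 1) / 6 := by
  induction K with
  | zero => simp
  | succ k ih =>
    rw [Finset.sum_Icc_succ_top (by omega), ih]
    push_cast
    ring

lemma my_pt {t u : ℝ} (ht : 0 < t) (htp : t < π) (hu : 0 < u) (hx : u * t ≤ 2.4) :
    u ^ 2 * (1 - (u * t) ^ 2 / 3) ≤ Real.sin (u * t) ^ 2 / Real.sin t ^ 2 := by
  have hst : 0 < Real.sin t := Real.sin_pos_of_pos_of_lt_pi ht htp
  have hstt : Real.sin t ≤ t := Real.sin_le ht.le
  have hx0 : 0 ≤ u * t := by positivity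
  have h1 : u * t - (u * t) ^ 3 / 6 ≤ Real.sin (u * t) := my_sin_ge_sub_cube hx0
  have hxsq : (u * t) ^ 2 ≤ 5.76 := by nlinarith
  have h0 : 0 ≤ u * t - (u * t) ^ 3 / 6 := by
    nlinarith [mul_le_mul_of_nonneg_left hxsq hx0]
  have h2 : (u * t) ^ 2 * (1 - (u * t) ^ 2 / 3) ≤ Real.sin (u * t) ^ 2 := by
    nlinarith [mul_self_le_mul_self h0 h1, sq_nonneg ((u * t) ^ 3)]
  rcases le_or_gt (1 - (u * t) ^ 2 / 3) 0 with hc | hc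
  · have hle : u ^ 2 * (1 - (u * t) ^ 2 / 3) ≤ 0 :=
      mul_nonpos_of_nonneg_of_nonpos (sq_nonneg u) hc
    exact hle.trans (by positivity)
  · rw [le_div_iff₀ (by positivity)]
    have hst2 : Real.sin t ^ 2 ≤ t ^ 2 := by nlinarith
    nlinarith [mul_le_mul_of_nonneg_left hst2 (le_of_lt (mul_pos (pow_pos hu 2) hc)), h2]


set_option maxHeartbeats 2000000 in
lemma my_final {N A u rr K p S : ℝ}
    (hN0 : 0 < N) (hA0 : 0 < A) (hr3' : 3 ≤ rr) (hu0 : 0 < u)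
    (hrA : rr + 1 ≤ A) (hN2A : 2 * A ≤ N) (hA4 : 4 ≤ A)
    (hKr : rr = 2 * K + 1)
    (hu1 : N < (u + 1) * rr) (hu2 : u * rr < N + rr)
    (hp0 : 0 < p) (hp2 : p < 3.15)
    (hS : K * u ^ 2 - p ^ 2 * u ^ 4 / (3 * N ^ 2) * (K * (K + 1) * (2 * K + 1) / 6) ≤ S) :
    (1 - A / N - 1 / rr) * (1 - p ^ 2 / 36 * ((rr + 1) / rr + 2 * A / N + A ^ 2 / N ^ 2))
      < 2 / (N * u) * S := by
  have hr0 : (0 : ℝ) < rr := by linarith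
  have hK1 : (1 : ℝ) ≤ K := by linarith
  have F1 : 0 < 1 - p ^ 2 / 36 * ((rr + 1) / rr + 2 * A / N + A ^ 2 / N ^ 2) := by
    have hd1 : A / N ≤ 1 / 2 := by rw [div_le_iff₀ hN0]; linarith
    have hd1' : 2 * A / N ≤ 1 := by rw [div_le_iff₀ hN0]; linarith
    have hd2 : (rr + 1) / rr ≤ 4 / 3 := by rw [div_le_iff₀ hr0]; linarith
    have hd3 : A ^ 2 / N ^ 2 ≤ 1 / 4 := by
      rw [div_le_iff₀ (pow_pos hN0 2)]
      nlinarith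
    have hd0 : 0 ≤ (rr + 1) / rr + 2 * A / N + A ^ 2 / N ^ 2 := by
      have h01 : 0 ≤ (rr + 1) / rr := by positivity
      have h02 : 0 ≤ 2 * A / N := div_nonneg (by linarith) hN0.le
      have h03 : 0 ≤ A ^ 2 / N ^ 2 := div_nonneg (sq_nonneg A) (sq_nonneg N)
      linarith
    have hpsq : p ^ 2 ≤ 9.9225 := by nlinarith
    nlinarith [mul_le_mul hpsq
      (show (rr + 1) / rr + 2 * A / N + A ^ 2 / N ^ 2 ≤ 31 / 12 by linarith)
      hd0 (by norm_num : (0 : ℝ) ≤ 9.9225)]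
  have F2 : 1 - A / N - 1 / rr < 2 * u * K / N := by
    have hNr : N - rr < u * rr := by linarith [hu1]
    have hkey : N * rr - A * rr - N < u * (rr - 1) * rr := by
      nlinarith [mul_lt_mul_of_pos_right hNr (show (0 : ℝ) < rr - 1 by linarith),
        mul_le_mul_of_nonneg_right (show rr - 1 ≤ A by linarith) hr0.le]
    rw [show (1 : ℝ) - A / N - 1 / rr = (N * rr - A * rr - N) / (N * rr) by
        field_simp,
      show 2 * u * K / N = (u * (rr - 1) * rr) / (N * rr) by
        rw [show K = (rr - 1) / 2 by linarith]; field_simp,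
      div_lt_div_iff₀ (mul_pos hN0 hr0) (mul_pos hN0 hr0)]
    nlinarith [mul_lt_mul_of_pos_right hkey (mul_pos hN0 hr0)]
  have hpoly : u ^ 2 * rr ^ 2 * (rr + 1)
      < (rr + 1) * N ^ 2 + 2 * A * N * rr + A ^ 2 * rr := by
    have hur : 0 < u * rr := mul_pos hu0 hr0
    have husq : u ^ 2 * rr ^ 2 < (N + rr) ^ 2 := by
      nlinarith [mul_self_lt_mul_self hur.le hu2]
    have hr2A : rr * (rr + 1) ≤ A ^ 2 := by
      nlinarith [mul_self_le_mul_self (by linarith : (0 : ℝ) ≤ rr + 1) hrA]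
    nlinarith [mul_lt_mul_of_pos_right husq (show (0 : ℝ) < rr + 1 by linarith),
      mul_le_mul_of_nonneg_left hrA (le_of_lt (mul_pos (mul_pos (by norm_num : (0:ℝ) < 2) hN0) hr0)),
      mul_le_mul_of_nonneg_right hr2A hr0.le]
  have F3 : p ^ 2 * u ^ 2 * rr * (rr + 1) / (36 * N ^ 2)
      < p ^ 2 / 36 * ((rr + 1) / rr + 2 * A / N + A ^ 2 / N ^ 2) := by
    rw [show p ^ 2 / 36 * ((rr + 1) / rr + 2 * A / N + A ^ 2 / N ^ 2)
        = p ^ 2 * ((rr + 1) * N ^ 2 + 2 * A * N * rr + A ^ 2 * rr)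
          / (36 * N ^ 2 * rr) by field_simp,
      div_lt_div_iff₀ (by positivity : (0 : ℝ) < 36 * N ^ 2)
        (mul_pos (by positivity : (0 : ℝ) < 36 * N ^ 2) hr0)]
    nlinarith [mul_lt_mul_of_pos_left hpoly
      (mul_pos (by positivity : (0 : ℝ) < 36 * N ^ 2) (pow_pos hp0 2))]
  have hP1pos : 0 < 2 * u * K / N := by
    apply div_pos (by nlinarith) hN0
  calc (1 - A / N - 1 / rr) * (1 - p ^ 2 / 36 * ((rr + 1) / rr + 2 * A / N + A ^ 2 / N ^ 2))
      < (2 * u * K / N) * (1 - p ^ 2 / 36 * ((rr + 1) / rr + 2 * A / N + A ^ 2 / N ^ 2)) :=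
        mul_lt_mul_of_pos_right F2 F1
    _ ≤ (2 * u * K / N) * (1 - p ^ 2 * u ^ 2 * rr * (rr + 1) / (36 * N ^ 2)) :=
        mul_le_mul_of_nonneg_left (by linarith) hP1pos.le
    _ = 2 / (N * u) * (K * u ^ 2 - p ^ 2 * u ^ 4 / (3 * N ^ 2) * (K * (K + 1) * (2 * K + 1) / 6)) := by
        rw [hKr]; field_simp; ring
    _ ≤ 2 / (N * u) * S :=
        mul_le_mul_of_nonneg_left hS
          (le_of_lt (div_pos (by norm_num) (mul_pos hN0 hu0)))

set_option maxHeartbeats 1000000 in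
theorem stmt_6 (r n n₀ m : ℕ) (hr3 : 3 ≤ r) (hodd : Odd r)
    (hn₀ : 0 < n₀) (hnn₀ : n₀ < n) (hr2 : r < 2 ^ n₀) (hm : 0 < m)
    (hm1 : (2 : ℝ) ^ n / r - 1 < m) (hm2 : (m : ℝ) < 2 ^ n / r + 1) :
    (2 / ((2 : ℝ) ^ n * m)) *
        ∑ j ∈ Finset.Icc 1 ((r - 1) / 2),
          Real.sin (π * m * j / 2 ^ n) ^ 2 / Real.sin (π * j / 2 ^ n) ^ 2
      >
    (1 - 1 / (2 : ℝ) ^ ((n : ℤ) - n₀) - 1 / r) *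
      (1 - (π ^ 2 / 36) * (((r : ℝ) + 1) / r + 1 / (2 : ℝ) ^ ((n : ℤ) - n₀ - 1)
        + 1 / (2 : ℝ) ^ (2 * ((n : ℤ) - n₀)))) := by
  obtain ⟨k0, hk0⟩ := hodd
  set Knat := (r - 1) / 2 with hKnatdef
  have hKr : r = 2 * Knat + 1 := by omega
  set N : ℝ := (2 : ℝ) ^ n with hNdef
  set A : ℝ := (2 : ℝ) ^ n₀ with hAdef
  set u : ℝ := (m : ℝ) with hudef
  have hN0 : (0 : ℝ) < N := by rw [hNdef]; positivity
  have hA0 : (0 : ℝ) < A := by rw [hAdef]; positivity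
  have hr0 : (0 : ℝ) < (r : ℝ) := by exact_mod_cast (by omega : 0 < r)
  have hr3' : (3 : ℝ) ≤ (r : ℝ) := by exact_mod_cast hr3
  have hu0 : (0 : ℝ) < u := by rw [hudef]; exact_mod_cast hm
  have hrA : (r : ℝ) + 1 ≤ A := by
    have h : r + 1 ≤ 2 ^ n₀ := hr2
    rw [hAdef]
    exact_mod_cast h
  have hN2A : 2 * A ≤ N := by
    rw [hNdef, hAdef]
    have h2 : (2 : ℝ) ^ (n₀ + 1) ≤ (2 : ℝ) ^ n := by
      apply pow_le_pow_right₀ (by norm_num) (by omega)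
    rw [pow_succ] at h2
    linarith
  have hA4 : (4 : ℝ) ≤ A := by
    have h : 4 ≤ 2 ^ n₀ := by omega
    rw [hAdef]
    exact_mod_cast h
  have hKr' : (r : ℝ) = 2 * (Knat : ℝ) + 1 := by exact_mod_cast hKr
  have hK1 : (1 : ℝ) ≤ (Knat : ℝ) := by
    have h : 1 ≤ Knat := by omega
    exact_mod_cast h
  have hu2 : u * r < N + r := by
    have h' : u - 1 < N / r := by linarith
    have h'' := (lt_div_iff₀ hr0).mp h'
    linarith [h'']
  have hu1 : N < (u + 1) * r := by
    have h' : N / r < u + 1 := by linarith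
    exact (div_lt_iff₀ hr0).mp h'
  have hπ0 := Real.pi_pos
  have hπ2 : π < 3.15 := Real.pi_lt_d2
  -- rewrite the zpow expressions
  have hzA : (2 : ℝ) ^ ((n : ℤ) - (n₀ : ℤ)) = N / A := by
    rw [zpow_sub₀ (by norm_num : (2 : ℝ) ≠ 0), zpow_natCast, zpow_natCast]
  have e1 : 1 / (2 : ℝ) ^ ((n : ℤ) - (n₀ : ℤ)) = A / N := by rw [hzA, one_div_div]
  have e2 : 1 / (2 : ℝ) ^ ((n : ℤ) - (n₀ : ℤ) - 1) = 2 * A / N := by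
    rw [zpow_sub₀ (by norm_num : (2 : ℝ) ≠ 0), hzA, zpow_one]
    rw [div_div_eq_mul_div]
    field_simp
  have e3 : 1 / (2 : ℝ) ^ (2 * ((n : ℤ) - (n₀ : ℤ))) = A ^ 2 / N ^ 2 := by
    rw [mul_comm, zpow_mul, hzA]
    rw [show ((2 : ℤ) : ℤ) = (2 : ℕ) by norm_num, zpow_natCast, div_pow, one_div_div]
  rw [e1, e2, e3]
  -- bound on u * Knat
  have huK : u * (Knat : ℝ) < 3 / 4 * N := by
    have h : u * (2 * (Knat : ℝ) + 1) < N + r := by rw [← hKr']; exact hu2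
    linarith [h, hu0, hrA, hN2A]
  -- the per-term bound
  set c : ℝ := π ^ 2 * u ^ 4 / (3 * N ^ 2) with hc
  have hterm : ∀ j ∈ Finset.Icc 1 Knat, u ^ 2 - c * (j : ℝ) ^ 2 ≤
      Real.sin (π * u * (j : ℝ) / N) ^ 2 / Real.sin (π * (j : ℝ) / N) ^ 2 := by
    intro j hj
    obtain ⟨hj1, hjK⟩ := Finset.mem_Icc.mp hj
    have hj1' : (1 : ℝ) ≤ (j : ℝ) := by exact_mod_cast hj1
    have hjK' : (j : ℝ) ≤ (Knat : ℝ) := by exact_mod_cast hjK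
    have hj0 : (0 : ℝ) < (j : ℝ) := by linarith
    have ht0 : 0 < π * (j : ℝ) / N := div_pos (mul_pos hπ0 hj0) hN0
    have hjN : (j : ℝ) < N := by linarith [hjK', hKr', hrA, hN2A, hN0]
    have htπ : π * (j : ℝ) / N < π := by
      rw [div_lt_iff₀ hN0]
      linarith [mul_pos hπ0 (sub_pos.2 hjN)]
    have hx24 : u * (π * (j : ℝ) / N) ≤ 2.4 := by
      have h5 : u * (j : ℝ) ≤ u * (Knat : ℝ) :=
        mul_le_mul_of_nonneg_left hjK' hu0.le
      have h6 : u * (j : ℝ) < 3 / 4 * N := lt_of_le_of_lt h5 huK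
      rw [show u * (π * (j : ℝ) / N) = π * (u * (j : ℝ)) / N by ring, div_le_iff₀ hN0]
      have hw1 := mul_le_mul_of_nonneg_right hπ2.le (le_of_lt (mul_pos hu0 hj0))
      have hw2 := mul_lt_mul_of_pos_left h6 (show (0 : ℝ) < 3.15 by norm_num)
      linarith [hw1, hw2, hN0]
    rw [show π * u * (j : ℝ) / N = u * (π * (j : ℝ) / N) by ring]
    calc u ^ 2 - c * (j : ℝ) ^ 2 = u ^ 2 * (1 - (u * (π * (j : ℝ) / N)) ^ 2 / 3) := by
          rw [hc]; field_simp
    _ ≤ _ := my_pt ht0 htπ hu0 hx24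
  have hsum := Finset.sum_le_sum hterm
  have hsumeq : ∑ j ∈ Finset.Icc 1 Knat, (u ^ 2 - c * (j : ℝ) ^ 2)
      = (Knat : ℝ) * u ^ 2 - c * ((Knat : ℝ) * ((Knat : ℝ) + 1) * (2 * (Knat : ℝ) + 1) / 6) := by
    rw [Finset.sum_sub_distrib, Finset.sum_const, Nat.card_Icc, ← Finset.mul_sum, my_sumsq]
    simp [nsmul_eq_mul]
  rw [hsumeq] at hsum
  rw [hc] at hsum
  exact my_final hN0 hA0 hr3' hu0 hrA hN2A hA4 hKr' hu1 hu2 hπ0 hπ2 hsum
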